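/- The commutator W^{(1)} := [W_{[2]}, E_1] of the cut-and-join operator with the raising operator E_1 = Σ_{n≥1} n·p_{n+1}·∂/∂p_n equals Σ_{k,l≥1} (k+l-1)·p_k·p_l·∂/∂p_{k+l-1} + Σ_{k,l≥1} k·l·p_{k+l+1}·∂²/(∂p_k ∂p_l), as operators on Λ. -/

import Mathlib

open MvPolynomial Finset

lemma pderiv_comm' (i j : ℕ) (f : MvPolynomial ℕ ℂ) :
    pderiv i (pderiv j f) = pderiv j (pderiv i f) := by
  induction f using MvPolynomial.induction_on' with
  | monomial s a =>
    by_cases h : i = j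
    · subst h; rfl
    · simp only [pderiv_monomial]
      rw [tsub_right_comm]
      congr 1
      rw [Finsupp.tsub_apply, Finsupp.tsub_apply, Finsupp.single_apply, Finsupp.single_apply,
        if_neg h, if_neg (Ne.symm h)]
      simp only [tsub_zero]
      ring
  | add p q hp hq => simp [map_add, hp, hq]

lemma pnat_finsum_eq (h : ℕ → MvPolynomial ℕ ℂ) {M : ℕ}
    (hs : ∀ n, 0 < n → h n ≠ 0 → n ≤ M) :
    ∑ᶠ (a : ℕ+), h ↑a = ∑ n ∈ Finset.Ioc 0 M, h n := by
  rw [finsum_eq_finset_sum_of_support_subset (fun a : ℕ+ => h ↑a)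
    (s := (Finset.Ioc 0 M).subtype (fun n => 0 < n))]
  · refine Finset.sum_bij' (fun (a : ℕ+) _ => (a : ℕ)) (fun n hn => ⟨n, by
      simp only [Finset.mem_Ioc] at hn; exact hn.1⟩) ?_ ?_ ?_ ?_ ?_
    · intro a ha
      exact Finset.mem_subtype.mp ha
    · intro n hn
      exact Finset.mem_subtype.mpr hn
    · intro a _; rfl
    · intro n _; rfl
    · intro a _; rfl
  · intro a ha
    simp only [Function.mem_support] at ha
    have : (a : ℕ) ∈ Finset.Ioc 0 M := Finset.mem_Ioc.mpr ⟨a.pos, hs _ a.pos ha⟩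
    exact Finset.mem_coe.mpr (Finset.mem_subtype.mpr this)

lemma pnat_finsum2_eq (F : ℕ → ℕ → MvPolynomial ℕ ℂ) {M : ℕ}
    (hs : ∀ a b, 0 < a → 0 < b → F a b ≠ 0 → a ≤ M ∧ b ≤ M) :
    ∑ᶠ (a : ℕ+) (b : ℕ+), F ↑a ↑b = ∑ a ∈ Finset.Ioc 0 M, ∑ b ∈ Finset.Ioc 0 M, F a b := by
  have h1 : ∀ a : ℕ+, (∑ᶠ (b : ℕ+), F ↑a ↑b) = (fun n => ∑ b ∈ Finset.Ioc 0 M, F n b) ↑a :=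
    fun a => pnat_finsum_eq (F ↑a) (fun b hb hFb => (hs ↑a b a.pos hb hFb).2)
  rw [finsum_congr h1]
  refine pnat_finsum_eq (fun n => ∑ b ∈ Finset.Ioc 0 M, F n b) ?_
  intro n hn hne
  rcases Finset.exists_ne_zero_of_sum_ne_zero hne with ⟨b, hb, hFb⟩
  exact (hs n b hn (Finset.mem_Ioc.mp hb).1 hFb).1

lemma shift_sum (G : ℕ → MvPolynomial ℕ ℂ) (M : ℕ) (h1 : G 1 = 0) (h2 : G (M + 1) = 0) :
    ∑ m ∈ Finset.Ioc 0 M, G (m + 1) = ∑ k ∈ Finset.Ioc 0 M, G k := by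
  have e1 : ∑ m ∈ Finset.Ioc 0 M, G (m + 1) = ∑ k ∈ Finset.Ioc 1 (M + 1), G k := by
    refine Finset.sum_bij' (fun m _ => m + 1) (fun k _ => k - 1) ?_ ?_ ?_ ?_ ?_
    · intro m hm; rw [Finset.mem_Ioc] at hm; show m + 1 ∈ Finset.Ioc 1 (M + 1)
      rw [Finset.mem_Ioc]; omega
    · intro k hk; rw [Finset.mem_Ioc] at hk; show k - 1 ∈ Finset.Ioc 0 M
      rw [Finset.mem_Ioc]; omega
    · intro m hm; show m + 1 - 1 = m; omega
    · intro k hk; rw [Finset.mem_Ioc] at hk; show k - 1 + 1 = k; omega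
    · intro m hm; rfl
  have e2 : ∑ k ∈ Finset.Ioc 0 (M + 1), G k
      = ∑ k ∈ Finset.Ioc 0 1, G k + ∑ k ∈ Finset.Ioc 1 (M + 1), G k :=
    (Finset.sum_Ioc_consecutive G (by omega) (by omega)).symm
  have e3 : ∑ k ∈ Finset.Ioc 0 (M + 1), G k
      = ∑ k ∈ Finset.Ioc 0 M, G k + ∑ k ∈ Finset.Ioc M (M + 1), G k :=
    (Finset.sum_Ioc_consecutive G (by omega) (by omega)).symm
  have e4 : Finset.Ioc 0 1 = {1} := by rfl
  have e5 : Finset.Ioc M (M + 1) = {M + 1} := by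
    ext x; simp [Finset.mem_Ioc]
  rw [e4, Finset.sum_singleton, h1, zero_add] at e2
  rw [e5, Finset.sum_singleton, h2, add_zero] at e3
  rw [e1, ← e2, e3]

lemma antisym_sum_zero (s : Finset ℕ) (c : ℕ → ℕ → ℂ) (U : ℕ → ℕ → MvPolynomial ℕ ℂ)
    (hc : ∀ a ∈ s, ∀ b ∈ s, c a b = - c b a) (hU : ∀ a ∈ s, ∀ b ∈ s, U a b = U b a) :
    ∑ a ∈ s, ∑ b ∈ s, c a b • U a b = 0 := by
  have key : (∑ a ∈ s, ∑ b ∈ s, c a b • U a b) = - ∑ a ∈ s, ∑ b ∈ s, c a b • U a b := by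
    calc ∑ a ∈ s, ∑ b ∈ s, c a b • U a b = ∑ b ∈ s, ∑ a ∈ s, c a b • U a b := Finset.sum_comm
      _ = ∑ a ∈ s, ∑ b ∈ s, c b a • U b a := rfl
      _ = ∑ a ∈ s, ∑ b ∈ s, -(c a b • U a b) := by
          refine Finset.sum_congr rfl fun a ha => Finset.sum_congr rfl fun b hb => ?_
          rw [hc b hb a ha, hU b hb a ha, neg_smul]
      _ = - ∑ a ∈ s, ∑ b ∈ s, c a b • U a b := by
          simp [Finset.sum_neg_distrib]
  have h2 : (2 : ℂ) • (∑ a ∈ s, ∑ b ∈ s, c a b • U a b) = 0 := by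
    rw [two_smul]
    nth_rewrite 1 [key]
    rw [neg_add_cancel]
  rcases smul_eq_zero.mp h2 with h | h
  · exact absurd h two_ne_zero
  · exact h

lemma pd_Esum (f : MvPolynomial ℕ ℂ) (N M : ℕ) (hN : ∀ n, N ≤ n → pderiv n f = 0)
    (hNM : N ≤ M) (j : ℕ) (hj : 1 ≤ j) :
    pderiv j (∑ m ∈ Finset.Ioc 0 M, ((m : ℕ) : ℂ) • (X (m + 1) * pderiv m f))
      = ((j - 1 : ℕ) : ℂ) • pderiv (j - 1) f
        + ∑ m ∈ Finset.Ioc 0 M, ((m : ℕ) : ℂ) • (X (m + 1) * pderiv j (pderiv m f)) := by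
  rw [map_sum]
  have step : ∀ m ∈ Finset.Ioc 0 M,
      pderiv j (((m : ℕ) : ℂ) • (X (m + 1) * pderiv m f))
        = (if m = j - 1 then ((m : ℕ) : ℂ) • pderiv m f else 0)
          + ((m : ℕ) : ℂ) • (X (m + 1) * pderiv j (pderiv m f)) := by
    intro m hm
    rw [Derivation.map_smul, pderiv_mul]
    by_cases h : m = j - 1
    · rw [if_pos h, show m + 1 = j by omega, pderiv_X_self, smul_add, one_mul]
    · rw [if_neg h, pderiv_X_of_ne (by omega), zero_mul, zero_add]
      exact (zero_add _).symm
  rw [Finset.sum_congr rfl step, Finset.sum_add_distrib,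
    Finset.sum_ite_eq' (Finset.Ioc 0 M) (j - 1) (fun m => ((m : ℕ) : ℂ) • pderiv m f)]
  congr 1
  by_cases hjs : j - 1 ∈ Finset.Ioc 0 M
  · rw [if_pos hjs]
  · rw [if_neg hjs]
    rw [Finset.mem_Ioc] at hjs
    rcases Nat.eq_or_lt_of_le hj with h1 | h1
    · simp [← h1]
    · rw [hN (j - 1) (by omega), smul_zero]

lemma pd2_Esum (f : MvPolynomial ℕ ℂ) (N M : ℕ) (hN : ∀ n, N ≤ n → pderiv n f = 0)
    (hNM : N ≤ M) (a b : ℕ) (ha : 1 ≤ a) (hb : 1 ≤ b) :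
    pderiv a (pderiv b (∑ m ∈ Finset.Ioc 0 M, ((m : ℕ) : ℂ) • (X (m + 1) * pderiv m f)))
      = ((b - 1 : ℕ) : ℂ) • pderiv a (pderiv (b - 1) f)
        + ((a - 1 : ℕ) : ℂ) • pderiv b (pderiv (a - 1) f)
        + ∑ m ∈ Finset.Ioc 0 M,
            ((m : ℕ) : ℂ) • (X (m + 1) * pderiv a (pderiv b (pderiv m f))) := by
  rw [pd_Esum f N M hN hNM b hb, map_add, Derivation.map_smul, map_sum]
  have step : ∀ m ∈ Finset.Ioc 0 M,
      pderiv a (((m : ℕ) : ℂ) • (X (m + 1) * pderiv b (pderiv m f)))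
        = (if m = a - 1 then ((m : ℕ) : ℂ) • pderiv b (pderiv m f) else 0)
          + ((m : ℕ) : ℂ) • (X (m + 1) * pderiv a (pderiv b (pderiv m f))) := by
    intro m hm
    rw [Derivation.map_smul, pderiv_mul]
    by_cases h : m = a - 1
    · rw [if_pos h, show m + 1 = a by omega, pderiv_X_self, smul_add, one_mul]
    · rw [if_neg h, pderiv_X_of_ne (by omega), zero_mul, zero_add]
      exact (zero_add _).symm
  rw [Finset.sum_congr rfl step, Finset.sum_add_distrib,
    Finset.sum_ite_eq' (Finset.Ioc 0 M) (a - 1)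
      (fun m => ((m : ℕ) : ℂ) • pderiv b (pderiv m f)), add_assoc]
  congr 2
  by_cases has : a - 1 ∈ Finset.Ioc 0 M
  · rw [if_pos has]
  · rw [if_neg has]
    rw [Finset.mem_Ioc] at has
    rcases Nat.eq_or_lt_of_le ha with h1 | h1
    · simp [← h1]
    · rw [hN (a - 1) (by omega), map_zero, smul_zero]

lemma pd_Asum (f : MvPolynomial ℕ ℂ) (M : ℕ) (j : ℕ) (hj : j ∈ Finset.Ioc 0 M) :
    pderiv j (∑ a ∈ Finset.Ioc 0 M, ∑ b ∈ Finset.Ioc 0 M,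
        ((a + b : ℕ) : ℂ) • (X a * X b * pderiv (a + b) f))
      = (∑ b ∈ Finset.Ioc 0 M, ((j + b : ℕ) : ℂ) • (X b * pderiv (j + b) f))
        + (∑ a ∈ Finset.Ioc 0 M, ((a + j : ℕ) : ℂ) • (X a * pderiv (a + j) f))
        + ∑ a ∈ Finset.Ioc 0 M, ∑ b ∈ Finset.Ioc 0 M,
            ((a + b : ℕ) : ℂ) • (X a * X b * pderiv j (pderiv (a + b) f)) := by
  simp only [map_sum]
  have step : ∀ a ∈ Finset.Ioc 0 M, ∀ b ∈ Finset.Ioc 0 M,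
      pderiv j (((a + b : ℕ) : ℂ) • (X a * X b * pderiv (a + b) f))
        = (if a = j then ((j + b : ℕ) : ℂ) • (X b * pderiv (j + b) f) else 0)
          + (if b = j then ((a + j : ℕ) : ℂ) • (X a * pderiv (a + j) f) else 0)
          + ((a + b : ℕ) : ℂ) • (X a * X b * pderiv j (pderiv (a + b) f)) := by
    intro a _ b _
    rw [Derivation.map_smul, pderiv_mul, pderiv_mul]
    by_cases h1 : a = j <;> by_cases h2 : b = j
    · subst h1; subst h2
      simp [pderiv_X_self, smul_add, add_mul]
    · subst h1
      simp [pderiv_X_self, pderiv_X_of_ne h2, h2, smul_add]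
    · subst h2
      simp [pderiv_X_self, pderiv_X_of_ne h1, h1, smul_add]
    · simp [pderiv_X_of_ne h1, pderiv_X_of_ne h2, h1, h2]
  rw [Finset.sum_congr rfl (fun a ha => Finset.sum_congr rfl (step a ha))]
  have split : ∀ a ∈ Finset.Ioc 0 M, (∑ b ∈ Finset.Ioc 0 M,
      ((if a = j then ((j + b : ℕ) : ℂ) • (X b * pderiv (j + b) f) else 0)
        + (if b = j then ((a + j : ℕ) : ℂ) • (X a * pderiv (a + j) f) else 0)
        + ((a + b : ℕ) : ℂ) • (X a * X b * pderiv j (pderiv (a + b) f))))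
      = (if a = j then (∑ b ∈ Finset.Ioc 0 M, ((j + b : ℕ) : ℂ) • (X b * pderiv (j + b) f))
          else 0)
        + ((a + j : ℕ) : ℂ) • (X a * pderiv (a + j) f)
        + ∑ b ∈ Finset.Ioc 0 M, ((a + b : ℕ) : ℂ) • (X a * X b * pderiv j (pderiv (a + b) f)) := by
    intro a _
    rw [Finset.sum_add_distrib, Finset.sum_add_distrib]
    congr 1
    congr 1
    · by_cases h : a = j <;> simp [h]
    · rw [Finset.sum_ite_eq' (Finset.Ioc 0 M) j
        (fun b => ((a + j : ℕ) : ℂ) • (X a * pderiv (a + j) f)), if_pos hj]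
  rw [Finset.sum_congr rfl split, Finset.sum_add_distrib, Finset.sum_add_distrib,
    Finset.sum_ite_eq' (Finset.Ioc 0 M) j
      (fun a => ∑ b ∈ Finset.Ioc 0 M, ((j + b : ℕ) : ℂ) • (X b * pderiv (j + b) f)), if_pos hj]

lemma pd_Bsum (f : MvPolynomial ℕ ℂ) (M : ℕ) (j : ℕ) :
    pderiv j (∑ a ∈ Finset.Ioc 0 M, ∑ b ∈ Finset.Ioc 0 M,
        ((a * b : ℕ) : ℂ) • (X (a + b) * pderiv a (pderiv b f)))
      = (∑ a ∈ Finset.Ioc 0 M, ∑ b ∈ Finset.Ioc 0 M,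
          ((a * b : ℕ) : ℂ) • ((if a + b = j then 1 else 0) * pderiv a (pderiv b f)))
        + ∑ a ∈ Finset.Ioc 0 M, ∑ b ∈ Finset.Ioc 0 M,
            ((a * b : ℕ) : ℂ) • (X (a + b) * pderiv j (pderiv a (pderiv b f))) := by
  rw [map_sum, ← Finset.sum_add_distrib]
  refine Finset.sum_congr rfl fun a _ => ?_
  rw [map_sum, ← Finset.sum_add_distrib]
  refine Finset.sum_congr rfl fun b _ => ?_
  rw [Derivation.map_smul, pderiv_mul, pderiv_X, Pi.single_apply, smul_add]

/-- The cut-and-join operator `W₂`. -/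
noncomputable def cutJoin (f : MvPolynomial ℕ ℂ) : MvPolynomial ℕ ℂ :=
  (2 : ℂ)⁻¹ •
    (∑ᶠ (a : ℕ+) (b : ℕ+),
        (((a : ℕ) + (b : ℕ) : ℕ) : ℂ) •
          (X (a : ℕ) * X (b : ℕ) * pderiv ((a : ℕ) + (b : ℕ)) f)
     + ∑ᶠ (a : ℕ+) (b : ℕ+),
        (((a : ℕ) * (b : ℕ) : ℕ) : ℂ) •
          (X ((a : ℕ) + (b : ℕ)) * pderiv (a : ℕ) (pderiv (b : ℕ) f)))

/-- The raising operator `E₁ = Σ_{n≥1} n·p_{n+1}·∂/∂pₙ`. -/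
noncomputable def ladderE1 (f : MvPolynomial ℕ ℂ) : MvPolynomial ℕ ℂ :=
  ∑ᶠ m : ℕ+, (((m : ℕ) : ℂ)) • (X ((m : ℕ) + 1) * pderiv (m : ℕ) f)

lemma ladder_eq (g : MvPolynomial ℕ ℂ) (M : ℕ) (hg : ∀ n, M ≤ n → pderiv n g = 0) :
    ladderE1 g = ∑ m ∈ Finset.Ioc 0 M, ((m : ℕ) : ℂ) • (X (m + 1) * pderiv m g) := by
  unfold ladderE1
  refine pnat_finsum_eq (fun m => ((m : ℕ) : ℂ) • (X (m + 1) * pderiv m g)) ?_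
  intro n _ hn
  by_contra h
  exact hn (by simp [hg n (by omega)])

lemma cutJoin_eq (g : MvPolynomial ℕ ℂ) (M : ℕ) (hg : ∀ n, M ≤ n → pderiv n g = 0) :
    cutJoin g = (2 : ℂ)⁻¹ •
      ((∑ a ∈ Finset.Ioc 0 M, ∑ b ∈ Finset.Ioc 0 M,
          ((a + b : ℕ) : ℂ) • (X a * X b * pderiv (a + b) g))
       + ∑ a ∈ Finset.Ioc 0 M, ∑ b ∈ Finset.Ioc 0 M,
          ((a * b : ℕ) : ℂ) • (X (a + b) * pderiv a (pderiv b g))) := by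
  unfold cutJoin
  congr 1
  congr 1
  · refine pnat_finsum2_eq (fun a b => ((a + b : ℕ) : ℂ) • (X a * X b * pderiv (a + b) g)) ?_
    intro a b ha hb hne
    constructor
    · by_contra h
      exact hne (by simp [hg (a + b) (by omega)])
    · by_contra h
      exact hne (by simp [hg (a + b) (by omega)])
  · refine pnat_finsum2_eq (fun a b => ((a * b : ℕ) : ℂ) • (X (a + b) * pderiv a (pderiv b g))) ?_
    intro a b ha hb hne
    constructor
    · by_contra h
      exact hne (by beta_reduce; rw [pderiv_comm']; simp [hg a (by omega)])
    · by_contra h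
      exact hne (by simp [hg b (by omega)])

lemma ladder_deriv_bound (g : MvPolynomial ℕ ℂ) (M : ℕ)
    (hg : ∀ n, M ≤ n → pderiv n g = 0) :
    ∀ n, M + 2 ≤ n → pderiv n (ladderE1 g) = 0 := by
  intro n hn
  rw [ladder_eq g M hg, map_sum]
  refine Finset.sum_eq_zero fun m hm => ?_
  rw [Finset.mem_Ioc] at hm
  rw [Derivation.map_smul, pderiv_mul, pderiv_X_of_ne (show m + 1 ≠ n by omega),
    pderiv_comm' n m, hg n (by omega)]
  simp

lemma cutJoin_deriv_bound (g : MvPolynomial ℕ ℂ) (M : ℕ)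
    (hg : ∀ n, M ≤ n → pderiv n g = 0) :
    ∀ n, 2 * M + 2 ≤ n → pderiv n (cutJoin g) = 0 := by
  intro n hn
  rw [cutJoin_eq g M hg, Derivation.map_smul, map_add, map_sum, map_sum]
  rw [show ∀ x y : MvPolynomial ℕ ℂ, x = 0 → y = 0 → (2:ℂ)⁻¹ • (x + y) = 0 from
    fun x y hx hy => by rw [hx, hy, add_zero, smul_zero]]
  · refine Finset.sum_eq_zero fun a ha => ?_
    rw [map_sum]
    refine Finset.sum_eq_zero fun b hb => ?_
    rw [Finset.mem_Ioc] at ha hb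
    by_cases hab : M ≤ a + b
    · rw [hg (a + b) hab]; simp
    · rw [Derivation.map_smul, pderiv_mul, pderiv_mul, pderiv_X_of_ne (show a ≠ n by omega),
        pderiv_X_of_ne (show b ≠ n by omega), pderiv_comm' n (a + b), hg n (by omega)]
      simp
  · refine Finset.sum_eq_zero fun a ha => ?_
    rw [map_sum]
    refine Finset.sum_eq_zero fun b hb => ?_
    rw [Finset.mem_Ioc] at ha hb
    rw [Derivation.map_smul, pderiv_mul, pderiv_X_of_ne (show a + b ≠ n by omega),
      pderiv_comm' n a, pderiv_comm' n b, hg n (by omega)]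
    simp

set_option maxHeartbeats 2000000 in
lemma main_finite (f : MvPolynomial ℕ ℂ) (N M : ℕ)
    (hN : ∀ n, N ≤ n → pderiv n f = 0) (hM : 2 * N + 4 ≤ M) :
    (2 : ℂ)⁻¹ •
      ((∑ a ∈ Finset.Ioc 0 M, ∑ b ∈ Finset.Ioc 0 M, ((a + b : ℕ) : ℂ) •
          (X a * X b * pderiv (a + b)
            (∑ m ∈ Finset.Ioc 0 M, ((m : ℕ) : ℂ) • (X (m + 1) * pderiv m f))))
        + ∑ a ∈ Finset.Ioc 0 M, ∑ b ∈ Finset.Ioc 0 M, ((a * b : ℕ) : ℂ) •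
            (X (a + b) * pderiv a (pderiv b
              (∑ m ∈ Finset.Ioc 0 M, ((m : ℕ) : ℂ) • (X (m + 1) * pderiv m f)))))
    - (∑ m ∈ Finset.Ioc 0 M, ((m : ℕ) : ℂ) • (X (m + 1) * pderiv m ((2 : ℂ)⁻¹ •
        ((∑ a ∈ Finset.Ioc 0 M, ∑ b ∈ Finset.Ioc 0 M, ((a + b : ℕ) : ℂ) •
            (X a * X b * pderiv (a + b) f))
          + ∑ a ∈ Finset.Ioc 0 M, ∑ b ∈ Finset.Ioc 0 M, ((a * b : ℕ) : ℂ) •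
              (X (a + b) * pderiv a (pderiv b f))))))
    = (∑ k ∈ Finset.Ioc 0 M, ∑ l ∈ Finset.Ioc 0 M, ((k + l - 1 : ℕ) : ℂ) •
        (X k * X l * pderiv (k + l - 1) f))
      + ∑ k ∈ Finset.Ioc 0 M, ∑ l ∈ Finset.Ioc 0 M, ((k * l : ℕ) : ℂ) •
          (X (k + l + 1) * pderiv k (pderiv l f)) := by
  have hNM : N ≤ M := by omega
  -- Step 1: expand A applied to the ladder sum
  have hAE : (∑ a ∈ Finset.Ioc 0 M, ∑ b ∈ Finset.Ioc 0 M, ((a + b : ℕ) : ℂ) •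
          (X a * X b * pderiv (a + b)
            (∑ m ∈ Finset.Ioc 0 M, ((m : ℕ) : ℂ) • (X (m + 1) * pderiv m f))))
      = (∑ a ∈ Finset.Ioc 0 M, ∑ b ∈ Finset.Ioc 0 M,
            (((a + b : ℕ) : ℂ) * ((a + b - 1 : ℕ) : ℂ)) • (X a * X b * pderiv (a + b - 1) f))
        + ∑ a ∈ Finset.Ioc 0 M, ∑ b ∈ Finset.Ioc 0 M, ∑ m ∈ Finset.Ioc 0 M,
            (((a + b : ℕ) : ℂ) * ((m : ℕ) : ℂ)) •
              (X a * X b * (X (m + 1) * pderiv (a + b) (pderiv m f))) := by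
    rw [← Finset.sum_add_distrib]
    refine Finset.sum_congr rfl fun a ha => ?_
    rw [← Finset.sum_add_distrib]
    refine Finset.sum_congr rfl fun b hb => ?_
    rw [Finset.mem_Ioc] at ha hb
    rw [pd_Esum f N M hN hNM (a + b) (by omega), mul_add, smul_add]
    congr 1
    · rw [mul_smul_comm, smul_smul]
    · rw [Finset.mul_sum, Finset.smul_sum]
      exact Finset.sum_congr rfl fun m _ => by rw [mul_smul_comm, smul_smul]
  -- Step 2: expand B applied to the ladder sum
  have hBE : (∑ a ∈ Finset.Ioc 0 M, ∑ b ∈ Finset.Ioc 0 M, ((a * b : ℕ) : ℂ) •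
            (X (a + b) * pderiv a (pderiv b
              (∑ m ∈ Finset.Ioc 0 M, ((m : ℕ) : ℂ) • (X (m + 1) * pderiv m f)))))
      = ((∑ a ∈ Finset.Ioc 0 M, ∑ b ∈ Finset.Ioc 0 M,
            (((a * b : ℕ) : ℂ) * ((b - 1 : ℕ) : ℂ)) • (X (a + b) * pderiv a (pderiv (b - 1) f)))
        + ∑ a ∈ Finset.Ioc 0 M, ∑ b ∈ Finset.Ioc 0 M,
            (((a * b : ℕ) : ℂ) * ((a - 1 : ℕ) : ℂ)) • (X (a + b) * pderiv b (pderiv (a - 1) f)))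
        + ∑ a ∈ Finset.Ioc 0 M, ∑ b ∈ Finset.Ioc 0 M, ∑ m ∈ Finset.Ioc 0 M,
            (((a * b : ℕ) : ℂ) * ((m : ℕ) : ℂ)) •
              (X (a + b) * (X (m + 1) * pderiv a (pderiv b (pderiv m f)))) := by
    rw [← Finset.sum_add_distrib, ← Finset.sum_add_distrib]
    refine Finset.sum_congr rfl fun a ha => ?_
    rw [← Finset.sum_add_distrib, ← Finset.sum_add_distrib]
    refine Finset.sum_congr rfl fun b hb => ?_
    rw [Finset.mem_Ioc] at ha hb
    rw [pd2_Esum f N M hN hNM a b (by omega) (by omega), mul_add, mul_add, smul_add, smul_add]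
    congr 1
    congr 1
    · rw [mul_smul_comm, smul_smul]
    · rw [mul_smul_comm, smul_smul]
    · rw [Finset.mul_sum, Finset.smul_sum]
      exact Finset.sum_congr rfl fun m _ => by rw [mul_smul_comm, smul_smul]
  -- Step 3: expand the ladder applied to cutJoin-side
  have hEW : (∑ m ∈ Finset.Ioc 0 M, ((m : ℕ) : ℂ) • (X (m + 1) * pderiv m ((2 : ℂ)⁻¹ •
        ((∑ a ∈ Finset.Ioc 0 M, ∑ b ∈ Finset.Ioc 0 M, ((a + b : ℕ) : ℂ) •
            (X a * X b * pderiv (a + b) f))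
          + ∑ a ∈ Finset.Ioc 0 M, ∑ b ∈ Finset.Ioc 0 M, ((a * b : ℕ) : ℂ) •
              (X (a + b) * pderiv a (pderiv b f))))))
      = (2 : ℂ)⁻¹ •
        ((∑ m ∈ Finset.Ioc 0 M, ∑ b ∈ Finset.Ioc 0 M,
            (((m : ℕ) : ℂ) * ((m + b : ℕ) : ℂ)) • (X (m + 1) * (X b * pderiv (m + b) f)))
          + (∑ m ∈ Finset.Ioc 0 M, ∑ a ∈ Finset.Ioc 0 M,
            (((m : ℕ) : ℂ) * ((a + m : ℕ) : ℂ)) • (X (m + 1) * (X a * pderiv (a + m) f)))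
          + (∑ m ∈ Finset.Ioc 0 M, ∑ a ∈ Finset.Ioc 0 M, ∑ b ∈ Finset.Ioc 0 M,
            (((m : ℕ) : ℂ) * ((a + b : ℕ) : ℂ)) •
              (X (m + 1) * (X a * X b * pderiv m (pderiv (a + b) f))))
          + ((∑ m ∈ Finset.Ioc 0 M, ∑ a ∈ Finset.Ioc 0 M, ∑ b ∈ Finset.Ioc 0 M,
            (((m : ℕ) : ℂ) * ((a * b : ℕ) : ℂ)) •
              (X (m + 1) * ((if a + b = m then 1 else 0) * pderiv a (pderiv b f))))
          + ∑ m ∈ Finset.Ioc 0 M, ∑ a ∈ Finset.Ioc 0 M, ∑ b ∈ Finset.Ioc 0 M,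
            (((m : ℕ) : ℂ) * ((a * b : ℕ) : ℂ)) •
              (X (m + 1) * (X (a + b) * pderiv m (pderiv a (pderiv b f)))))) := by
    have step1 : ∀ m ∈ Finset.Ioc 0 M,
        ((m : ℕ) : ℂ) • (X (m + 1) * pderiv m ((2 : ℂ)⁻¹ •
          ((∑ a ∈ Finset.Ioc 0 M, ∑ b ∈ Finset.Ioc 0 M, ((a + b : ℕ) : ℂ) •
              (X a * X b * pderiv (a + b) f))
            + ∑ a ∈ Finset.Ioc 0 M, ∑ b ∈ Finset.Ioc 0 M, ((a * b : ℕ) : ℂ) •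
                (X (a + b) * pderiv a (pderiv b f)))))
        = (2 : ℂ)⁻¹ • (((m : ℕ) : ℂ) • (X (m + 1) *
            (((∑ b ∈ Finset.Ioc 0 M, ((m + b : ℕ) : ℂ) • (X b * pderiv (m + b) f))
              + (∑ a ∈ Finset.Ioc 0 M, ((a + m : ℕ) : ℂ) • (X a * pderiv (a + m) f))
              + ∑ a ∈ Finset.Ioc 0 M, ∑ b ∈ Finset.Ioc 0 M,
                  ((a + b : ℕ) : ℂ) • (X a * X b * pderiv m (pderiv (a + b) f)))
            + ((∑ a ∈ Finset.Ioc 0 M, ∑ b ∈ Finset.Ioc 0 M,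
                ((a * b : ℕ) : ℂ) • ((if a + b = m then 1 else 0) * pderiv a (pderiv b f)))
              + ∑ a ∈ Finset.Ioc 0 M, ∑ b ∈ Finset.Ioc 0 M,
                  ((a * b : ℕ) : ℂ) • (X (a + b) * pderiv m (pderiv a (pderiv b f))))))) := by
      intro m hm
      rw [Derivation.map_smul, map_add, pd_Asum f M m hm, pd_Bsum f M m,
        mul_smul_comm, smul_comm]
    rw [Finset.sum_congr rfl step1, ← Finset.smul_sum]
    congr 1
    rw [← Finset.sum_add_distrib, ← Finset.sum_add_distrib, ← Finset.sum_add_distrib,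
      ← Finset.sum_add_distrib]
    refine Finset.sum_congr rfl fun m hm => ?_
    simp only [mul_add, smul_add, Finset.mul_sum, Finset.smul_sum, mul_smul_comm, smul_smul]
  -- Step 4: cancellation A2 = EA3
  have hA2 : (∑ a ∈ Finset.Ioc 0 M, ∑ b ∈ Finset.Ioc 0 M, ∑ m ∈ Finset.Ioc 0 M,
            (((a + b : ℕ) : ℂ) * ((m : ℕ) : ℂ)) •
              (X a * X b * (X (m + 1) * pderiv (a + b) (pderiv m f))))
      = ∑ m ∈ Finset.Ioc 0 M, ∑ a ∈ Finset.Ioc 0 M, ∑ b ∈ Finset.Ioc 0 M,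
            (((m : ℕ) : ℂ) * ((a + b : ℕ) : ℂ)) •
              (X (m + 1) * (X a * X b * pderiv m (pderiv (a + b) f))) := by
    calc (∑ a ∈ Finset.Ioc 0 M, ∑ b ∈ Finset.Ioc 0 M, ∑ m ∈ Finset.Ioc 0 M,
            (((a + b : ℕ) : ℂ) * ((m : ℕ) : ℂ)) •
              (X a * X b * (X (m + 1) * pderiv (a + b) (pderiv m f))))
        = ∑ a ∈ Finset.Ioc 0 M, ∑ m ∈ Finset.Ioc 0 M, ∑ b ∈ Finset.Ioc 0 M,
            (((a + b : ℕ) : ℂ) * ((m : ℕ) : ℂ)) •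
              (X a * X b * (X (m + 1) * pderiv (a + b) (pderiv m f))) :=
          Finset.sum_congr rfl fun a _ => Finset.sum_comm
      _ = ∑ m ∈ Finset.Ioc 0 M, ∑ a ∈ Finset.Ioc 0 M, ∑ b ∈ Finset.Ioc 0 M,
            (((a + b : ℕ) : ℂ) * ((m : ℕ) : ℂ)) •
              (X a * X b * (X (m + 1) * pderiv (a + b) (pderiv m f))) := Finset.sum_comm
      _ = ∑ m ∈ Finset.Ioc 0 M, ∑ a ∈ Finset.Ioc 0 M, ∑ b ∈ Finset.Ioc 0 M,
            (((m : ℕ) : ℂ) * ((a + b : ℕ) : ℂ)) •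
              (X (m + 1) * (X a * X b * pderiv m (pderiv (a + b) f))) := by
          refine Finset.sum_congr rfl fun m _ => Finset.sum_congr rfl fun a _ =>
            Finset.sum_congr rfl fun b _ => ?_
          rw [pderiv_comm' (a + b) m f]
          congr 1
          · ring
          · ring
  -- Step 5: cancellation B3 = EB2
  have hB3 : (∑ a ∈ Finset.Ioc 0 M, ∑ b ∈ Finset.Ioc 0 M, ∑ m ∈ Finset.Ioc 0 M,
            (((a * b : ℕ) : ℂ) * ((m : ℕ) : ℂ)) •
              (X (a + b) * (X (m + 1) * pderiv a (pderiv b (pderiv m f)))))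
      = ∑ m ∈ Finset.Ioc 0 M, ∑ a ∈ Finset.Ioc 0 M, ∑ b ∈ Finset.Ioc 0 M,
            (((m : ℕ) : ℂ) * ((a * b : ℕ) : ℂ)) •
              (X (m + 1) * (X (a + b) * pderiv m (pderiv a (pderiv b f)))) := by
    calc (∑ a ∈ Finset.Ioc 0 M, ∑ b ∈ Finset.Ioc 0 M, ∑ m ∈ Finset.Ioc 0 M,
            (((a * b : ℕ) : ℂ) * ((m : ℕ) : ℂ)) •
              (X (a + b) * (X (m + 1) * pderiv a (pderiv b (pderiv m f)))))
        = ∑ a ∈ Finset.Ioc 0 M, ∑ m ∈ Finset.Ioc 0 M, ∑ b ∈ Finset.Ioc 0 M,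
            (((a * b : ℕ) : ℂ) * ((m : ℕ) : ℂ)) •
              (X (a + b) * (X (m + 1) * pderiv a (pderiv b (pderiv m f)))) :=
          Finset.sum_congr rfl fun a _ => Finset.sum_comm
      _ = ∑ m ∈ Finset.Ioc 0 M, ∑ a ∈ Finset.Ioc 0 M, ∑ b ∈ Finset.Ioc 0 M,
            (((a * b : ℕ) : ℂ) * ((m : ℕ) : ℂ)) •
              (X (a + b) * (X (m + 1) * pderiv a (pderiv b (pderiv m f)))) := Finset.sum_comm
      _ = ∑ m ∈ Finset.Ioc 0 M, ∑ a ∈ Finset.Ioc 0 M, ∑ b ∈ Finset.Ioc 0 M,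
            (((m : ℕ) : ℂ) * ((a * b : ℕ) : ℂ)) •
              (X (m + 1) * (X (a + b) * pderiv m (pderiv a (pderiv b f)))) := by
          refine Finset.sum_congr rfl fun m _ => Finset.sum_congr rfl fun a _ =>
            Finset.sum_congr rfl fun b _ => ?_
          rw [pderiv_comm' b m f, pderiv_comm' a m (pderiv b f)]
          congr 1
          · ring
          · ring
  -- Step 6: EA1 = W
  have hEA1 : (∑ m ∈ Finset.Ioc 0 M, ∑ b ∈ Finset.Ioc 0 M,
        (((m : ℕ) : ℂ) * ((m + b : ℕ) : ℂ)) • (X (m + 1) * (X b * pderiv (m + b) f)))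
      = ∑ a ∈ Finset.Ioc 0 M, ∑ b ∈ Finset.Ioc 0 M,
          (((a - 1 : ℕ) : ℂ) * ((a + b - 1 : ℕ) : ℂ)) • (X a * X b * pderiv (a + b - 1) f) := by
    calc (∑ m ∈ Finset.Ioc 0 M, ∑ b ∈ Finset.Ioc 0 M,
        (((m : ℕ) : ℂ) * ((m + b : ℕ) : ℂ)) • (X (m + 1) * (X b * pderiv (m + b) f)))
        = ∑ m ∈ Finset.Ioc 0 M, ∑ b ∈ Finset.Ioc 0 M,
            (((m + 1 - 1 : ℕ) : ℂ) * ((m + 1 + b - 1 : ℕ) : ℂ)) •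
              (X (m + 1) * X b * pderiv (m + 1 + b - 1) f) := by
          refine Finset.sum_congr rfl fun m _ => Finset.sum_congr rfl fun b _ => ?_
          rw [show m + 1 - 1 = m by omega, show m + 1 + b - 1 = m + b by omega, mul_assoc]
      _ = ∑ a ∈ Finset.Ioc 0 M, ∑ b ∈ Finset.Ioc 0 M,
            (((a - 1 : ℕ) : ℂ) * ((a + b - 1 : ℕ) : ℂ)) • (X a * X b * pderiv (a + b - 1) f) := by
          refine shift_sum (fun a => ∑ b ∈ Finset.Ioc 0 M,
            (((a - 1 : ℕ) : ℂ) * ((a + b - 1 : ℕ) : ℂ)) •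
              (X a * X b * pderiv (a + b - 1) f)) M ?_ ?_
          · simp
          · refine Finset.sum_eq_zero fun b hb => ?_
            rw [show M + 1 + b - 1 = M + b by omega, hN (M + b) (by omega)]
            simp
  -- Step 7: EA2 = W
  have hEA2 : (∑ m ∈ Finset.Ioc 0 M, ∑ a ∈ Finset.Ioc 0 M,
        (((m : ℕ) : ℂ) * ((a + m : ℕ) : ℂ)) • (X (m + 1) * (X a * pderiv (a + m) f)))
      = ∑ a ∈ Finset.Ioc 0 M, ∑ b ∈ Finset.Ioc 0 M,
          (((a - 1 : ℕ) : ℂ) * ((a + b - 1 : ℕ) : ℂ)) • (X a * X b * pderiv (a + b - 1) f) := by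
    calc (∑ m ∈ Finset.Ioc 0 M, ∑ a ∈ Finset.Ioc 0 M,
        (((m : ℕ) : ℂ) * ((a + m : ℕ) : ℂ)) • (X (m + 1) * (X a * pderiv (a + m) f)))
        = ∑ m ∈ Finset.Ioc 0 M, ∑ b ∈ Finset.Ioc 0 M,
            (((m + 1 - 1 : ℕ) : ℂ) * ((m + 1 + b - 1 : ℕ) : ℂ)) •
              (X (m + 1) * X b * pderiv (m + 1 + b - 1) f) := by
          refine Finset.sum_congr rfl fun m _ => Finset.sum_congr rfl fun b _ => ?_
          rw [show m + 1 - 1 = m by omega, show m + 1 + b - 1 = m + b by omega,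
            show b + m = m + b by omega, mul_assoc]
      _ = ∑ a ∈ Finset.Ioc 0 M, ∑ b ∈ Finset.Ioc 0 M,
            (((a - 1 : ℕ) : ℂ) * ((a + b - 1 : ℕ) : ℂ)) • (X a * X b * pderiv (a + b - 1) f) := by
          refine shift_sum (fun a => ∑ b ∈ Finset.Ioc 0 M,
            (((a - 1 : ℕ) : ℂ) * ((a + b - 1 : ℕ) : ℂ)) •
              (X a * X b * pderiv (a + b - 1) f)) M ?_ ?_
          · simp
          · refine Finset.sum_eq_zero fun b hb => ?_
            rw [show M + 1 + b - 1 = M + b by omega, hN (M + b) (by omega)]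
            simp
  -- Step 8: B1 = Z
  have hB1 : (∑ a ∈ Finset.Ioc 0 M, ∑ b ∈ Finset.Ioc 0 M,
        (((a * b : ℕ) : ℂ) * ((b - 1 : ℕ) : ℂ)) • (X (a + b) * pderiv a (pderiv (b - 1) f)))
      = ∑ a ∈ Finset.Ioc 0 M, ∑ b ∈ Finset.Ioc 0 M,
          (((a * (b + 1) : ℕ) : ℂ) * ((b : ℕ) : ℂ)) • (X (a + b + 1) * pderiv a (pderiv b f)) := by
    refine Finset.sum_congr rfl fun a _ => ?_
    calc (∑ b ∈ Finset.Ioc 0 M,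
        (((a * b : ℕ) : ℂ) * ((b - 1 : ℕ) : ℂ)) • (X (a + b) * pderiv a (pderiv (b - 1) f)))
        = ∑ l ∈ Finset.Ioc 0 M,
            (((a * (l + 1) : ℕ) : ℂ) * ((l + 1 - 1 : ℕ) : ℂ)) •
              (X (a + (l + 1)) * pderiv a (pderiv (l + 1 - 1) f)) := by
          refine (shift_sum (fun b =>
            (((a * b : ℕ) : ℂ) * ((b - 1 : ℕ) : ℂ)) •
              (X (a + b) * pderiv a (pderiv (b - 1) f))) M ?_ ?_).symm
          · simp
          · beta_reduce
            rw [show M + 1 - 1 = M by omega, hN M (by omega)]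
            simp
      _ = ∑ b ∈ Finset.Ioc 0 M,
            (((a * (b + 1) : ℕ) : ℂ) * ((b : ℕ) : ℂ)) • (X (a + b + 1) * pderiv a (pderiv b f)) := by
          refine Finset.sum_congr rfl fun l _ => ?_
          rw [show l + 1 - 1 = l by omega, show a + (l + 1) = a + l + 1 by omega]
  -- Step 9: B2 = Z
  have hB2 : (∑ a ∈ Finset.Ioc 0 M, ∑ b ∈ Finset.Ioc 0 M,
        (((a * b : ℕ) : ℂ) * ((a - 1 : ℕ) : ℂ)) • (X (a + b) * pderiv b (pderiv (a - 1) f)))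
      = ∑ a ∈ Finset.Ioc 0 M, ∑ b ∈ Finset.Ioc 0 M,
          (((a * (b + 1) : ℕ) : ℂ) * ((b : ℕ) : ℂ)) • (X (a + b + 1) * pderiv a (pderiv b f)) := by
    calc (∑ a ∈ Finset.Ioc 0 M, ∑ b ∈ Finset.Ioc 0 M,
        (((a * b : ℕ) : ℂ) * ((a - 1 : ℕ) : ℂ)) • (X (a + b) * pderiv b (pderiv (a - 1) f)))
        = ∑ k ∈ Finset.Ioc 0 M, ∑ b ∈ Finset.Ioc 0 M,
            ((((k + 1) * b : ℕ) : ℂ) * ((k + 1 - 1 : ℕ) : ℂ)) •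
              (X (k + 1 + b) * pderiv b (pderiv (k + 1 - 1) f)) := by
          refine (shift_sum (fun a => ∑ b ∈ Finset.Ioc 0 M,
            (((a * b : ℕ) : ℂ) * ((a - 1 : ℕ) : ℂ)) •
              (X (a + b) * pderiv b (pderiv (a - 1) f))) M ?_ ?_).symm
          · simp
          · refine Finset.sum_eq_zero fun b hb => ?_
            rw [show M + 1 - 1 = M by omega, hN M (by omega)]
            simp
      _ = ∑ k ∈ Finset.Ioc 0 M, ∑ b ∈ Finset.Ioc 0 M,
            (((b * (k + 1) : ℕ) : ℂ) * ((k : ℕ) : ℂ)) • (X (b + k + 1) * pderiv b (pderiv k f)) := by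
          refine Finset.sum_congr rfl fun k _ => Finset.sum_congr rfl fun b _ => ?_
          rw [show k + 1 - 1 = k by omega, show k + 1 + b = b + k + 1 by omega,
            show (k + 1) * b = b * (k + 1) by ring]
      _ = ∑ a ∈ Finset.Ioc 0 M, ∑ b ∈ Finset.Ioc 0 M,
          (((a * (b + 1) : ℕ) : ℂ) * ((b : ℕ) : ℂ)) •
            (X (a + b + 1) * pderiv a (pderiv b f)) := Finset.sum_comm
  -- Step 10: collapse the delta sum EB1
  have hEB1 : (∑ m ∈ Finset.Ioc 0 M, ∑ a ∈ Finset.Ioc 0 M, ∑ b ∈ Finset.Ioc 0 M,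
        (((m : ℕ) : ℂ) * ((a * b : ℕ) : ℂ)) •
          (X (m + 1) * ((if a + b = m then 1 else 0) * pderiv a (pderiv b f))))
      = ∑ a ∈ Finset.Ioc 0 M, ∑ b ∈ Finset.Ioc 0 M,
          (((a + b : ℕ) : ℂ) * ((a * b : ℕ) : ℂ)) • (X (a + b + 1) * pderiv a (pderiv b f)) := by
    calc (∑ m ∈ Finset.Ioc 0 M, ∑ a ∈ Finset.Ioc 0 M, ∑ b ∈ Finset.Ioc 0 M,
        (((m : ℕ) : ℂ) * ((a * b : ℕ) : ℂ)) •
          (X (m + 1) * ((if a + b = m then 1 else 0) * pderiv a (pderiv b f))))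
        = ∑ a ∈ Finset.Ioc 0 M, ∑ m ∈ Finset.Ioc 0 M, ∑ b ∈ Finset.Ioc 0 M,
            (((m : ℕ) : ℂ) * ((a * b : ℕ) : ℂ)) •
              (X (m + 1) * ((if a + b = m then 1 else 0) * pderiv a (pderiv b f))) :=
          Finset.sum_comm
      _ = ∑ a ∈ Finset.Ioc 0 M, ∑ b ∈ Finset.Ioc 0 M, ∑ m ∈ Finset.Ioc 0 M,
            (((m : ℕ) : ℂ) * ((a * b : ℕ) : ℂ)) •
              (X (m + 1) * ((if a + b = m then 1 else 0) * pderiv a (pderiv b f))) :=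
          Finset.sum_congr rfl fun a _ => Finset.sum_comm
      _ = ∑ a ∈ Finset.Ioc 0 M, ∑ b ∈ Finset.Ioc 0 M,
            (((a + b : ℕ) : ℂ) * ((a * b : ℕ) : ℂ)) • (X (a + b + 1) * pderiv a (pderiv b f)) := by
          refine Finset.sum_congr rfl fun a ha => Finset.sum_congr rfl fun b hb => ?_
          rw [Finset.mem_Ioc] at ha hb
          have e1 : ∀ m ∈ Finset.Ioc 0 M,
              (((m : ℕ) : ℂ) * ((a * b : ℕ) : ℂ)) •
                (X (m + 1) * ((if a + b = m then 1 else 0) * pderiv a (pderiv b f)))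
              = if a + b = m then (((m : ℕ) : ℂ) * ((a * b : ℕ) : ℂ)) •
                  (X (m + 1) * pderiv a (pderiv b f)) else 0 := by
            intro m _
            by_cases h : a + b = m
            · rw [if_pos h, if_pos h, one_mul]
            · rw [if_neg h, if_neg h, zero_mul, mul_zero, smul_zero]
          rw [Finset.sum_congr rfl e1, Finset.sum_ite_eq (Finset.Ioc 0 M) (a + b)
            (fun m => (((m : ℕ) : ℂ) * ((a * b : ℕ) : ℂ)) • (X (m + 1) * pderiv a (pderiv b f)))]
          by_cases hab : a + b ∈ Finset.Ioc 0 M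
          · rw [if_pos hab]
          · rw [if_neg hab]
            rw [Finset.mem_Ioc] at hab
            have hz : pderiv a (pderiv b f) = 0 := by
              by_cases hbN : N ≤ b
              · rw [hN b hbN, map_zero]
              · rw [pderiv_comm', hN a (by omega), map_zero]
            rw [hz]
            simp
  -- Step 11: symmetrization identity for the first-order part
  have key1 : (∑ a ∈ Finset.Ioc 0 M, ∑ b ∈ Finset.Ioc 0 M,
        (((a + b : ℕ) : ℂ) * ((a + b - 1 : ℕ) : ℂ)) • (X a * X b * pderiv (a + b - 1) f))
      = (2 : ℂ) • (∑ a ∈ Finset.Ioc 0 M, ∑ b ∈ Finset.Ioc 0 M,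
          (((a - 1 : ℕ) : ℂ) * ((a + b - 1 : ℕ) : ℂ)) • (X a * X b * pderiv (a + b - 1) f))
        + (2 : ℂ) • (∑ k ∈ Finset.Ioc 0 M, ∑ l ∈ Finset.Ioc 0 M, ((k + l - 1 : ℕ) : ℂ) •
            (X k * X l * pderiv (k + l - 1) f)) := by
    have z1 : (∑ a ∈ Finset.Ioc 0 M, ∑ b ∈ Finset.Ioc 0 M,
        ((((a + b : ℕ) : ℂ) * ((a + b - 1 : ℕ) : ℂ)
          - 2 * (((a - 1 : ℕ) : ℂ) * ((a + b - 1 : ℕ) : ℂ))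
          - 2 * ((a + b - 1 : ℕ) : ℂ)) • (X a * X b * pderiv (a + b - 1) f))) = 0 := by
      refine antisym_sum_zero (Finset.Ioc 0 M)
        (fun a b => ((a + b : ℕ) : ℂ) * ((a + b - 1 : ℕ) : ℂ)
          - 2 * (((a - 1 : ℕ) : ℂ) * ((a + b - 1 : ℕ) : ℂ)) - 2 * ((a + b - 1 : ℕ) : ℂ))
        (fun a b => X a * X b * pderiv (a + b - 1) f) ?_ ?_
      · intro a ha b hb
        rw [Finset.mem_Ioc] at ha hb
        beta_reduce
        rw [Nat.cast_sub (show 1 ≤ a + b by omega), Nat.cast_sub (show 1 ≤ b + a by omega),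
          Nat.cast_sub (show 1 ≤ a by omega), Nat.cast_sub (show 1 ≤ b by omega)]
        push_cast
        ring
      · intro a ha b hb
        beta_reduce
        rw [show b + a - 1 = a + b - 1 by omega]
        ring
    calc (∑ a ∈ Finset.Ioc 0 M, ∑ b ∈ Finset.Ioc 0 M,
        (((a + b : ℕ) : ℂ) * ((a + b - 1 : ℕ) : ℂ)) • (X a * X b * pderiv (a + b - 1) f))
        = (∑ a ∈ Finset.Ioc 0 M, ∑ b ∈ Finset.Ioc 0 M,
            (((a + b : ℕ) : ℂ) * ((a + b - 1 : ℕ) : ℂ)) • (X a * X b * pderiv (a + b - 1) f))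
          - (∑ a ∈ Finset.Ioc 0 M, ∑ b ∈ Finset.Ioc 0 M,
            ((((a + b : ℕ) : ℂ) * ((a + b - 1 : ℕ) : ℂ)
              - 2 * (((a - 1 : ℕ) : ℂ) * ((a + b - 1 : ℕ) : ℂ))
              - 2 * ((a + b - 1 : ℕ) : ℂ)) • (X a * X b * pderiv (a + b - 1) f))) := by
          rw [z1, sub_zero]
      _ = (2 : ℂ) • (∑ a ∈ Finset.Ioc 0 M, ∑ b ∈ Finset.Ioc 0 M,
            (((a - 1 : ℕ) : ℂ) * ((a + b - 1 : ℕ) : ℂ)) • (X a * X b * pderiv (a + b - 1) f))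
          + (2 : ℂ) • (∑ k ∈ Finset.Ioc 0 M, ∑ l ∈ Finset.Ioc 0 M, ((k + l - 1 : ℕ) : ℂ) •
              (X k * X l * pderiv (k + l - 1) f)) := by
          simp only [Finset.smul_sum, smul_smul]
          rw [← Finset.sum_sub_distrib, ← Finset.sum_add_distrib]
          refine Finset.sum_congr rfl fun a _ => ?_
          rw [← Finset.sum_sub_distrib, ← Finset.sum_add_distrib]
          refine Finset.sum_congr rfl fun b _ => ?_
          rw [← sub_smul, ← add_smul]
          congr 1
          ring
  -- Step 12: symmetrization identity for the second-order part
  have key2 : (∑ a ∈ Finset.Ioc 0 M, ∑ b ∈ Finset.Ioc 0 M,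
        (((a + b : ℕ) : ℂ) * ((a * b : ℕ) : ℂ)) • (X (a + b + 1) * pderiv a (pderiv b f)))
      = (2 : ℂ) • (∑ a ∈ Finset.Ioc 0 M, ∑ b ∈ Finset.Ioc 0 M,
          (((a * (b + 1) : ℕ) : ℂ) * ((b : ℕ) : ℂ)) • (X (a + b + 1) * pderiv a (pderiv b f)))
        - (2 : ℂ) • (∑ k ∈ Finset.Ioc 0 M, ∑ l ∈ Finset.Ioc 0 M, ((k * l : ℕ) : ℂ) •
            (X (k + l + 1) * pderiv k (pderiv l f))) := by
    have z2 : (∑ a ∈ Finset.Ioc 0 M, ∑ b ∈ Finset.Ioc 0 M,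
        ((((a + b : ℕ) : ℂ) * ((a * b : ℕ) : ℂ)
          - 2 * (((a * (b + 1) : ℕ) : ℂ) * ((b : ℕ) : ℂ))
          + 2 * ((a * b : ℕ) : ℂ)) • (X (a + b + 1) * pderiv a (pderiv b f)))) = 0 := by
      refine antisym_sum_zero (Finset.Ioc 0 M)
        (fun a b => ((a + b : ℕ) : ℂ) * ((a * b : ℕ) : ℂ)
          - 2 * (((a * (b + 1) : ℕ) : ℂ) * ((b : ℕ) : ℂ)) + 2 * ((a * b : ℕ) : ℂ))
        (fun a b => X (a + b + 1) * pderiv a (pderiv b f)) ?_ ?_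
      · intro a ha b hb
        beta_reduce
        push_cast
        ring
      · intro a ha b hb
        beta_reduce
        rw [show b + a + 1 = a + b + 1 by omega, pderiv_comm']
    calc (∑ a ∈ Finset.Ioc 0 M, ∑ b ∈ Finset.Ioc 0 M,
        (((a + b : ℕ) : ℂ) * ((a * b : ℕ) : ℂ)) • (X (a + b + 1) * pderiv a (pderiv b f)))
        = (∑ a ∈ Finset.Ioc 0 M, ∑ b ∈ Finset.Ioc 0 M,
            (((a + b : ℕ) : ℂ) * ((a * b : ℕ) : ℂ)) • (X (a + b + 1) * pderiv a (pderiv b f)))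
          - (∑ a ∈ Finset.Ioc 0 M, ∑ b ∈ Finset.Ioc 0 M,
            ((((a + b : ℕ) : ℂ) * ((a * b : ℕ) : ℂ)
              - 2 * (((a * (b + 1) : ℕ) : ℂ) * ((b : ℕ) : ℂ))
              + 2 * ((a * b : ℕ) : ℂ)) • (X (a + b + 1) * pderiv a (pderiv b f)))) := by
          rw [z2, sub_zero]
      _ = (2 : ℂ) • (∑ a ∈ Finset.Ioc 0 M, ∑ b ∈ Finset.Ioc 0 M,
            (((a * (b + 1) : ℕ) : ℂ) * ((b : ℕ) : ℂ)) • (X (a + b + 1) * pderiv a (pderiv b f)))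
          - (2 : ℂ) • (∑ k ∈ Finset.Ioc 0 M, ∑ l ∈ Finset.Ioc 0 M, ((k * l : ℕ) : ℂ) •
              (X (k + l + 1) * pderiv k (pderiv l f))) := by
          simp only [Finset.smul_sum, smul_smul]
          rw [← Finset.sum_sub_distrib, ← Finset.sum_sub_distrib]
          refine Finset.sum_congr rfl fun a _ => ?_
          rw [← Finset.sum_sub_distrib, ← Finset.sum_sub_distrib]
          refine Finset.sum_congr rfl fun b _ => ?_
          rw [← sub_smul, ← sub_smul]
          congr 1
          ring
  -- Final assembly
  rw [hAE, hBE, hEW, hA2, hB3, hEA1, hEA2, hB1, hB2, hEB1, key1, key2]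
  module



/-- `W⁽¹⁾ := [W₂, E₁] = Σ_{k,l≥1} (k+l−1)·p_k p_l ∂_{p_{k+l−1}}
 + Σ_{k,l≥1} k·l·p_{k+l+1} ∂_{p_k}∂_{p_l}` as operators on `Λ`. -/
theorem comm_cutJoin_ladder (f : MvPolynomial ℕ ℂ) :
    cutJoin (ladderE1 f) - ladderE1 (cutJoin f)
      = (∑ᶠ (k : ℕ+) (l : ℕ+),
          (((k : ℕ) + (l : ℕ) - 1 : ℕ) : ℂ) •
            (X (k : ℕ) * X (l : ℕ) * pderiv ((k : ℕ) + (l : ℕ) - 1) f))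
        + ∑ᶠ (k : ℕ+) (l : ℕ+),
          (((k : ℕ) * (l : ℕ) : ℕ) : ℂ) •
            (X ((k : ℕ) + (l : ℕ) + 1) * pderiv (k : ℕ) (pderiv (l : ℕ) f)) := by
  obtain ⟨N, hN⟩ : ∃ N, ∀ n, N ≤ n → pderiv n f = 0 :=
    ⟨f.vars.sup id + 1, fun n hn => pderiv_eq_zero_of_notMem_vars fun hmem => by
      have := Finset.le_sup (f := id) hmem
      simp only [id] at this
      omega⟩
  set M := 2 * N + 4 with hM
  have hfM : ∀ n, M ≤ n → pderiv n f = 0 := fun n hn => hN n (by omega)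
  have hEf : ∀ n, M ≤ n → pderiv n (ladderE1 f) = 0 :=
    fun n hn => ladder_deriv_bound f N hN n (by omega)
  have hWf : ∀ n, M ≤ n → pderiv n (cutJoin f) = 0 :=
    fun n hn => cutJoin_deriv_bound f N hN n (by omega)
  have hR1 : (∑ᶠ (k : ℕ+) (l : ℕ+),
          (((k : ℕ) + (l : ℕ) - 1 : ℕ) : ℂ) •
            (X (k : ℕ) * X (l : ℕ) * pderiv ((k : ℕ) + (l : ℕ) - 1) f))
      = ∑ k ∈ Finset.Ioc 0 M, ∑ l ∈ Finset.Ioc 0 M,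
          ((k + l - 1 : ℕ) : ℂ) • (X k * X l * pderiv (k + l - 1) f) := by
    exact pnat_finsum2_eq
      (fun k l => ((k + l - 1 : ℕ) : ℂ) • (X k * X l * pderiv (k + l - 1) f))
      (fun k l hk hl hne => by
        constructor <;> [skip; skip] <;> by_contra h <;>
          exact hne (by simp [hN (k + l - 1) (by omega)]))
  have hR2 : (∑ᶠ (k : ℕ+) (l : ℕ+),
          (((k : ℕ) * (l : ℕ) : ℕ) : ℂ) •
            (X ((k : ℕ) + (l : ℕ) + 1) * pderiv (k : ℕ) (pderiv (l : ℕ) f)))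
      = ∑ k ∈ Finset.Ioc 0 M, ∑ l ∈ Finset.Ioc 0 M,
          ((k * l : ℕ) : ℂ) • (X (k + l + 1) * pderiv k (pderiv l f)) := by
    exact pnat_finsum2_eq
      (fun k l => ((k * l : ℕ) : ℂ) • (X (k + l + 1) * pderiv k (pderiv l f)))
      (fun k l hk hl hne => by
        constructor
        · by_contra h
          exact hne (by beta_reduce; rw [pderiv_comm']; simp [hN k (by omega)])
        · by_contra h
          exact hne (by simp [hN l (by omega)]))
  rw [cutJoin_eq (ladderE1 f) M hEf, ladder_eq (cutJoin f) M hWf, cutJoin_eq f M hfM,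
    ladder_eq f M hfM, hR1, hR2]
  exact main_finite f N M hN (by omega)
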